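/- Let $x$ be an element of a polymatroid base polytope $P_\rho$ and let $c_e : \mathbb{R}_{\geq 0} \to \mathbb{R}_{\geq 0}$, for $e \in E$, be continuous nondecreasing cost functions. Then $x$ minimizes the Beckmann potential $\Phi(x) = \sum_{e \in E} \int_0^{x_e} c_e(t)\,dt$ over $P_\rho$ if and only if for every pair $e, f \in E$ such that $x + \epsilon(\chi_f - \chi_e) \in P_\rho$ for some $\epsilon > 0$, we have $c_e(x_e) \leq c_f(x_f)$. -/

import Mathlib

open Finset MeasureTheory

/-- The polymatroid base polytope of `ρ`. -/
def basePolytope {E : Type*} [Fintype E] (ρ : Finset E → ℝ) : Set (E → ℝ) :=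
  {x | (∀ e, 0 ≤ x e) ∧ (∀ U : Finset E, ∑ e ∈ U, x e ≤ ρ U) ∧ ∑ e, x e = ρ Finset.univ}

/-- The Beckmann potential. -/
noncomputable def beckmann {E : Type*} [Fintype E] (c : E → ℝ → ℝ) (x : E → ℝ) : ℝ :=
  ∑ e, ∫ t in (0:ℝ)..(x e), c e t

section Aux
set_option linter.unusedSectionVars false
set_option linter.unusedVariables false
variable {E : Type*} [Fintype E] [DecidableEq E]

lemma sum_single_diff (e f : E) (V : Finset E) :
    ∑ g ∈ V, ((Pi.single f (1:ℝ) - Pi.single e 1) : E → ℝ) g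
      = (if f ∈ V then (1:ℝ) else 0) - (if e ∈ V then 1 else 0) := by
  simp only [Pi.sub_apply, Pi.single_apply, Finset.sum_sub_distrib, Finset.sum_ite_eq' V]

lemma tight_union (ρ : Finset E → ℝ) (x : E → ℝ)
    (hsub : ∀ U V : Finset E, ρ (U ∪ V) + ρ (U ∩ V) ≤ ρ U + ρ V)
    (hle : ∀ U : Finset E, ∑ e ∈ U, x e ≤ ρ U)
    {U V : Finset E} (hU : ∑ e ∈ U, x e = ρ U) (hV : ∑ e ∈ V, x e = ρ V) :
    ∑ e ∈ U ∪ V, x e = ρ (U ∪ V) ∧ ∑ e ∈ U ∩ V, x e = ρ (U ∩ V) := by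
  have h1 : ∑ e ∈ U ∪ V, x e + ∑ e ∈ U ∩ V, x e = ∑ e ∈ U, x e + ∑ e ∈ V, x e :=
    Finset.sum_union_inter
  have h2 := hle (U ∪ V)
  have h3 := hle (U ∩ V)
  have h4 := hsub U V
  constructor <;> linarith

noncomputable def depSet (ρ : Finset E → ℝ) (x : E → ℝ) (f : E) : Finset E :=
  Finset.univ.filter fun e => ∀ V : Finset E, (∑ g ∈ V, x g = ρ V) → f ∈ V → e ∈ V

lemma mem_depSet {ρ : Finset E → ℝ} {x : E → ℝ} {f e : E} :
    e ∈ depSet ρ x f ↔ ∀ V : Finset E, (∑ g ∈ V, x g = ρ V) → f ∈ V → e ∈ V := by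
  simp [depSet]

lemma self_mem_depSet (ρ : Finset E → ℝ) (x : E → ℝ) (f : E) : f ∈ depSet ρ x f :=
  mem_depSet.2 fun _ _ hf => hf

lemma tight_depSet (ρ : Finset E → ℝ) (x : E → ℝ)
    (hsub : ∀ U V : Finset E, ρ (U ∪ V) + ρ (U ∩ V) ≤ ρ U + ρ V)
    (hle : ∀ U : Finset E, ∑ e ∈ U, x e ≤ ρ U)
    (huniv : ∑ e, x e = ρ Finset.univ) (f : E) :
    ∑ e ∈ depSet ρ x f, x e = ρ (depSet ρ x f) := by
  classical
  set P : Finset E → Prop := fun V => ((∑ g ∈ V, x g) = ρ V) ∧ f ∈ V with hP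
  have hinf : ∀ s : Finset (Finset E), s.Nonempty → (∀ V ∈ s, P V) → P (s.inf id) := by
    intro s hs
    induction hs using Finset.Nonempty.cons_induction with
    | singleton a => intro h; simpa using h a (by simp)
    | cons a s ha hs ih =>
      intro h
      rw [Finset.inf_cons]
      have h1 : P a := h a (by simp)
      have h2 : P (s.inf id) := ih (fun V hV => h V (by simp [hV]))
      exact ⟨(tight_union ρ x hsub hle h1.1 h2.1).2, Finset.mem_inter.2 ⟨h1.2, h2.2⟩⟩
  set T : Finset (Finset E) :=
    Finset.univ.powerset.filter fun V => ((∑ g ∈ V, x g) = ρ V) ∧ f ∈ V with hT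
  have hTne : T.Nonempty := ⟨Finset.univ, by simp [hT, huniv]⟩
  have hmemT : ∀ V ∈ T, P V := by intro V hV; simpa [hT] using (Finset.mem_filter.1 hV).2
  have hPinf : P (T.inf id) := hinf T hTne hmemT
  have heq : depSet ρ x f = T.inf id := by
    apply Finset.Subset.antisymm
    · have : depSet ρ x f ≤ T.inf id := by
        apply Finset.le_inf
        intro V hV
        have h := hmemT V hV
        intro e he
        exact (mem_depSet.1 he) V h.1 h.2
      exact this
    · intro e he
      rw [mem_depSet]
      intro V hV hfV
      have hVT : V ∈ T := by simp [hT, hV, hfV]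
      have h : T.inf id ≤ id V := Finset.inf_le hVT
      exact h he
  rw [heq]; exact hPinf.1

lemma exchange_mem (ρ : Finset E → ℝ) (x : E → ℝ) (hx : x ∈ basePolytope ρ)
    {e f : E} (hef : e ≠ f) (hxe : 0 < x e) (hdep : e ∈ depSet ρ x f) :
    ∃ ε : ℝ, 0 < ε ∧ x + ε • ((Pi.single f (1:ℝ) - Pi.single e 1)) ∈ basePolytope ρ := by
  obtain ⟨hx0, hxle, hxuniv⟩ := hx
  set S : Finset (Finset E) := Finset.univ.powerset.filter fun V => f ∈ V ∧ e ∉ V with hS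
  have hSne : S.Nonempty := ⟨{f}, by simp [hS, hef]⟩
  have hslack : ∀ V ∈ S, 0 < ρ V - ∑ g ∈ V, x g := by
    intro V hV
    simp only [hS, Finset.mem_filter] at hV
    rcases lt_or_eq_of_le (hxle V) with h | h
    · linarith
    · exact absurd ((mem_depSet.1 hdep) V h hV.2.1) hV.2.2
  set ε : ℝ := min (x e) (S.inf' hSne fun V => ρ V - ∑ g ∈ V, x g) with hε
  have hεpos : 0 < ε := lt_min hxe ((Finset.lt_inf'_iff _).2 hslack)
  have hεe : ε ≤ x e := min_le_left _ _
  have hεS : ∀ V ∈ S, ε ≤ ρ V - ∑ g ∈ V, x g := fun V hV =>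
    le_trans (min_le_right _ _) (Finset.inf'_le _ hV)
  refine ⟨ε, hεpos, ?_, ?_, ?_⟩
  · intro g
    rcases eq_or_ne g e with rfl | hg
    · simp [Pi.single_apply, hef, hef.symm]
      linarith
    · rcases eq_or_ne g f with rfl | hg'
      · simp [Pi.single_apply, hef.symm]
        have := hx0 g; positivity
      · simp [Pi.single_apply, hg, hg']
        exact hx0 g
  · intro V
    have hsum : ∑ g ∈ V, (x + ε • ((Pi.single f (1:ℝ) - Pi.single e 1)) : E → ℝ) g
        = (∑ g ∈ V, x g) + ε * ((if f ∈ V then (1:ℝ) else 0) - (if e ∈ V then 1 else 0)) := by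
      simp only [Pi.add_apply, Pi.smul_apply, smul_eq_mul, Finset.sum_add_distrib,
        ← Finset.mul_sum, sum_single_diff]
    rw [hsum]
    by_cases hfV : f ∈ V <;> by_cases heV : e ∈ V <;> simp [hfV, heV]
    · exact hxle V
    · have : V ∈ S := by simp [hS, hfV, heV]
      have := hεS V this; linarith
    · have := hxle V; linarith
    · exact hxle V
  · have hsum : ∑ g, (x + ε • ((Pi.single f (1:ℝ) - Pi.single e 1)) : E → ℝ) g
        = (∑ g, x g) + ε * ((if f ∈ Finset.univ then (1:ℝ) else 0)
            - (if e ∈ Finset.univ then 1 else 0)) := by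
      simp only [Pi.add_apply, Pi.smul_apply, smul_eq_mul, Finset.sum_add_distrib,
        ← Finset.mul_sum, sum_single_diff]
    rw [hsum]; simp [hxuniv]

lemma threshold (ρ : Finset E → ℝ)
    (hsub : ∀ U V : Finset E, ρ (U ∪ V) + ρ (U ∩ V) ≤ ρ U + ρ V)
    (hnorm : ρ ∅ = 0)
    (x y : E → ℝ) (hx : x ∈ basePolytope ρ) (hy : y ∈ basePolytope ρ) (w : E → ℝ)
    (hw : ∀ e f : E,
      (∃ ε : ℝ, 0 < ε ∧ x + ε • ((Pi.single f (1:ℝ) - Pi.single e 1)) ∈ basePolytope ρ) →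
      w e ≤ w f)
    (t : ℝ) :
    ∑ g ∈ Finset.univ.filter (fun g => w g ≤ t), y g
      ≤ ∑ g ∈ Finset.univ.filter (fun g => w g ≤ t), x g := by
  classical
  obtain ⟨hx0, hxle, hxuniv⟩ := hx
  obtain ⟨hy0, hyle, _⟩ := hy
  set A : Finset E := Finset.univ.filter (fun g => w g ≤ t) with hA
  have tightU : ∀ B : Finset E,
      ∑ g ∈ B.biUnion (depSet ρ x), x g = ρ (B.biUnion (depSet ρ x)) := by
    intro B
    induction B using Finset.induction_on with
    | empty => simpa using hnorm.symm
    | insert _ _ hnotmem ih =>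
      rw [Finset.biUnion_insert]
      exact (tight_union ρ x hsub hxle (tight_depSet ρ x hsub hxle hxuniv _) ih).1
  set U : Finset E := A.biUnion (depSet ρ x) with hU
  have hAU : A ⊆ U := fun g hg =>
    Finset.mem_biUnion.2 ⟨g, hg, self_mem_depSet ρ x g⟩
  have hzero : ∀ g ∈ U, g ∉ A → x g = 0 := by
    intro g hgU hgA
    obtain ⟨f, hfA, hgdep⟩ := Finset.mem_biUnion.1 hgU
    by_contra hne
    have hpos : 0 < x g := lt_of_le_of_ne (hx0 g) (Ne.symm hne)
    have hgf : g ≠ f := fun h => hgA (h ▸ hfA)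
    have := hw g f (exchange_mem ρ x ⟨hx0, hxle, hxuniv⟩ hgf hpos hgdep)
    have hfT : w f ≤ t := (Finset.mem_filter.1 hfA).2
    have hgT : ¬ w g ≤ t := fun h => hgA (Finset.mem_filter.2 ⟨Finset.mem_univ g, h⟩)
    exact hgT (le_trans this hfT)
  calc ∑ g ∈ A, y g ≤ ∑ g ∈ U, y g :=
        Finset.sum_le_sum_of_subset_of_nonneg hAU (fun g _ _ => hy0 g)
    _ ≤ ρ U := hyle U
    _ = ∑ g ∈ U, x g := (tightU A).symm
    _ = ∑ g ∈ A, x g := (Finset.sum_subset hAU hzero).symm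

lemma abel_nonneg (w z : E → ℝ) (hz : ∑ g, z g = 0)
    (ht : ∀ t : ℝ, 0 ≤ ∑ g ∈ Finset.univ.filter (fun g => t < w g), z g) :
    0 ≤ ∑ g, w g * z g := by
  classical
  have key : ∀ n : ℕ, ∀ w : E → ℝ, (Finset.univ.image w).card ≤ n →
      (∀ t : ℝ, 0 ≤ ∑ g ∈ Finset.univ.filter (fun g => t < w g), z g) →
      0 ≤ ∑ g, w g * z g := by
    intro n
    induction n with
    | zero =>
      intro w hcard _
      have : (Finset.univ.image w) = ∅ := Finset.card_eq_zero.1 (Nat.le_zero.1 hcard)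
      have huniv : (Finset.univ : Finset E) = ∅ := Finset.image_eq_empty.1 this
      rw [huniv, Finset.sum_empty]
    | succ n ih =>
      intro w hcard hthr
      rcases (Finset.univ.image w).eq_empty_or_nonempty with hemp | hne
      · have huniv : (Finset.univ : Finset E) = ∅ := Finset.image_eq_empty.1 hemp
        rw [huniv, Finset.sum_empty]
      set m : ℝ := (Finset.univ.image w).min' hne with hm
      have hmle : ∀ g : E, m ≤ w g := fun g =>
        Finset.min'_le _ _ (Finset.mem_image_of_mem w (Finset.mem_univ g))
      by_cases hall : ∀ g : E, w g = m
      · have : ∑ g, w g * z g = m * ∑ g, z g := by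
          rw [Finset.mul_sum]; exact Finset.sum_congr rfl fun g _ => by rw [hall g]
        rw [this, hz, mul_zero]
      · push_neg at hall
        obtain ⟨g₀, hg₀⟩ := hall
        have hg₀m : w g₀ ∈ (Finset.univ.image w).erase m :=
          Finset.mem_erase.2 ⟨hg₀, Finset.mem_image_of_mem w (Finset.mem_univ g₀)⟩
        have hne' : ((Finset.univ.image w).erase m).Nonempty := ⟨_, hg₀m⟩
        set m' : ℝ := ((Finset.univ.image w).erase m).min' hne' with hm'
        have hm'mem := Finset.min'_mem _ hne'
        have hmm' : m < m' :=
          lt_of_le_of_ne (Finset.min'_le _ _ (Finset.mem_of_mem_erase hm'mem))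
            (Ne.symm (Finset.mem_erase.1 hm'mem).1)
        set w' : E → ℝ := fun g => if w g = m then m' else w g with hw'
        have hw'ge : ∀ g, m' ≤ w' g := by
          intro g
          by_cases h : w g = m
          · simp [hw', h]
          · simp only [hw', h, if_false]
            exact Finset.min'_le _ _ (Finset.mem_erase.2
              ⟨h, Finset.mem_image_of_mem w (Finset.mem_univ g)⟩)
        have himg : Finset.univ.image w' ⊆ (Finset.univ.image w).erase m := by
          intro v hv
          obtain ⟨g, _, rfl⟩ := Finset.mem_image.1 hv
          by_cases h : w g = m
          · simpa [hw', h] using hm'mem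
          · simp only [hw', h, if_false]
            exact Finset.mem_erase.2 ⟨h, Finset.mem_image_of_mem w (Finset.mem_univ g)⟩
        have hcard' : (Finset.univ.image w').card ≤ n := by
          have h1 := Finset.card_le_card himg
          have h2 : ((Finset.univ.image w).erase m).card = (Finset.univ.image w).card - 1 :=
            Finset.card_erase_of_mem (Finset.min'_mem _ hne)
          omega
        have hthr' : ∀ t : ℝ, 0 ≤ ∑ g ∈ Finset.univ.filter (fun g => t < w' g), z g := by
          intro t
          by_cases htm : t < m'
          · have : Finset.univ.filter (fun g => t < w' g) = Finset.univ :=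
              Finset.filter_true_of_mem (fun g _ => lt_of_lt_of_le htm (hw'ge g))
            rw [this]
            exact le_of_eq hz.symm
          · push_neg at htm
            have : Finset.univ.filter (fun g => t < w' g)
                = Finset.univ.filter (fun g => t < w g) := by
              apply Finset.filter_congr
              intro g _
              by_cases h : w g = m
              · simp only [hw', h, if_true]
                constructor
                · intro hlt; exact absurd hlt (not_lt.2 htm)
                · intro hlt; exact absurd (h ▸ hlt) (not_lt.2 (le_trans hmm'.le htm))
              · simp [hw', h]
            rw [this]
            exact hthr t
        have heq : ∑ g, w' g * z g
            = ∑ g, w g * z g + (m' - m) * ∑ g ∈ Finset.univ.filter (fun g => w g = m), z g := by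
          have hpt : ∀ g : E, w' g * z g
              = w g * z g + (if w g = m then (m' - m) * z g else 0) := by
            intro g
            by_cases h : w g = m
            · simp only [hw', h, if_true]; ring
            · simp [hw', h]
          rw [Finset.sum_congr rfl (fun g _ => hpt g), Finset.sum_add_distrib,
            ← Finset.sum_filter, Finset.mul_sum]
        have hneg : ∑ g ∈ Finset.univ.filter (fun g => w g = m), z g ≤ 0 := by
          have hsplit := Finset.sum_filter_add_sum_filter_not Finset.univ
            (fun g => m < w g) z
          have hfe : Finset.univ.filter (fun g => ¬ m < w g)
              = Finset.univ.filter (fun g => w g = m) := by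
            apply Finset.filter_congr
            intro g _
            constructor
            · intro h; exact le_antisymm (not_lt.1 h) (hmle g)
            · intro h; exact not_lt.2 (le_of_eq h)
          rw [hfe] at hsplit
          have := ht m
          have hthm := hthr m
          linarith [hsplit, hthm, hz]
        have h0 := ih w' hcard' hthr'
        have hmul : (m' - m) * ∑ g ∈ Finset.univ.filter (fun g => w g = m), z g ≤ 0 :=
          mul_nonpos_of_nonneg_of_nonpos (by linarith) hneg
        linarith
  exact key _ w le_rfl ht

end Aux

lemma cInt (c : ℝ → ℝ) (hc : ContinuousOn c (Set.Ici 0)) {a b : ℝ} (ha : 0 ≤ a) (hb : 0 ≤ b) :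
    IntervalIntegrable c volume a b := by
  apply ContinuousOn.intervalIntegrable
  apply hc.mono
  intro t ht
  rcases Set.mem_uIcc.1 ht with h | h
  · exact le_trans ha h.1
  · exact le_trans hb h.1

lemma grad_le (c : ℝ → ℝ) (hcont : ContinuousOn c (Set.Ici 0)) (hmono : MonotoneOn c (Set.Ici 0))
    {a b : ℝ} (ha : 0 ≤ a) (hb : 0 ≤ b) :
    c a * (b - a) ≤ ∫ t in a..b, c t := by
  rcases le_total a b with h | h
  · have h1 : ∫ _t in a..b, c a ≤ ∫ t in a..b, c t := by
      apply intervalIntegral.integral_mono_on h intervalIntegrable_const (cInt c hcont ha hb)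
      intro t ht
      exact hmono (Set.mem_Ici.2 ha) (Set.mem_Ici.2 (le_trans ha ht.1)) ht.1
    rw [intervalIntegral.integral_const, smul_eq_mul] at h1
    linarith
  · rw [intervalIntegral.integral_symm]
    have h1 : ∫ t in b..a, c t ≤ ∫ _t in b..a, c a := by
      apply intervalIntegral.integral_mono_on h (cInt c hcont hb ha) intervalIntegrable_const
      intro t ht
      exact hmono (Set.mem_Ici.2 (le_trans hb ht.1)) (Set.mem_Ici.2 ha) ht.2
    rw [intervalIntegral.integral_const, smul_eq_mul] at h1
    linarith

lemma grad_ge (c : ℝ → ℝ) (hcont : ContinuousOn c (Set.Ici 0)) (hmono : MonotoneOn c (Set.Ici 0))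
    {a b : ℝ} (ha : 0 ≤ a) (hab : a ≤ b) :
    ∫ t in a..b, c t ≤ c b * (b - a) := by
  have hb : 0 ≤ b := le_trans ha hab
  have h1 : ∫ t in a..b, c t ≤ ∫ _t in a..b, c b := by
    apply intervalIntegral.integral_mono_on hab (cInt c hcont ha hb) intervalIntegrable_const
    intro t ht
    exact hmono (Set.mem_Ici.2 (le_trans ha ht.1)) (Set.mem_Ici.2 hb) ht.2
  rw [intervalIntegral.integral_const, smul_eq_mul] at h1
  linarith

lemma beckmann_sub {E : Type*} [Fintype E] (c : E → ℝ → ℝ)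
    (hc_cont : ∀ e, ContinuousOn (c e) (Set.Ici 0)) (x y : E → ℝ)
    (hx0 : ∀ e, 0 ≤ x e) (hy0 : ∀ e, 0 ≤ y e) :
    beckmann c y - beckmann c x = ∑ e, ∫ t in (x e)..(y e), c e t := by
  rw [beckmann, beckmann, ← Finset.sum_sub_distrib]
  exact Finset.sum_congr rfl fun e _ =>
    intervalIntegral.integral_interval_sub_left
      (cInt _ (hc_cont e) le_rfl (hy0 e)) (cInt _ (hc_cont e) le_rfl (hx0 e))

theorem stmt0 {E : Type*} [Fintype E] [DecidableEq E] (ρ : Finset E → ℝ)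
    (hsub : ∀ U V : Finset E, ρ (U ∪ V) + ρ (U ∩ V) ≤ ρ U + ρ V)
    (hmono : ∀ U V : Finset E, U ⊆ V → ρ U ≤ ρ V)
    (hnorm : ρ ∅ = 0)
    (c : E → ℝ → ℝ)
    (hc_cont : ∀ e, ContinuousOn (c e) (Set.Ici 0))
    (hc_mono : ∀ e, MonotoneOn (c e) (Set.Ici 0))
    (hc_nonneg : ∀ e, ∀ t ∈ Set.Ici (0:ℝ), 0 ≤ c e t)
    (x : E → ℝ) (hx : x ∈ basePolytope ρ) :
    (∀ y ∈ basePolytope ρ, beckmann c x ≤ beckmann c y) ↔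
      (∀ e f : E,
        (∃ ε : ℝ, 0 < ε ∧ x + ε • (Pi.single f (1:ℝ) - Pi.single e 1) ∈ basePolytope ρ) →
        c e (x e) ≤ c f (x f)) := by
  obtain ⟨hx0, hxle, hxuniv⟩ := hx
  have hxB : x ∈ basePolytope ρ := ⟨hx0, hxle, hxuniv⟩
  constructor
  · -- minimizer ⇒ exchange condition
    intro hmin e f ⟨ε, hε, hyB⟩
    rcases eq_or_ne e f with rfl | hef
    · exact le_rfl
    have hyεe : (x + ε • ((Pi.single f (1:ℝ) - Pi.single e 1)) : E → ℝ) e = x e - ε := by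
      simp [Pi.single_apply, hef, (Ne.symm hef)]
      try ring
    have hxeε : 0 ≤ x e - ε := by
      have := hyB.1 e
      rwa [hyεe] at this
    -- key inequality for each small δ
    have key : ∀ δ : ℝ, 0 < δ → δ ≤ ε → c e (x e - δ) ≤ c f (x f + δ) := by
      intro δ hδ hδε
      set yδ : E → ℝ := x + δ • ((Pi.single f (1:ℝ) - Pi.single e 1)) with hyδdef
      have hyδval : ∀ g, yδ g
          = x g + δ * ((if g = f then (1:ℝ) else 0) - (if g = e then 1 else 0)) := by
        intro g
        simp [hyδdef, Pi.single_apply]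
      have hyδe : yδ e = x e - δ := by rw [hyδval]; simp [hef, Ne.symm hef]; try ring
      have hyδf : yδ f = x f + δ := by rw [hyδval]; simp [Ne.symm hef]; try ring
      have hyδg : ∀ g, g ≠ e → g ≠ f → yδ g = x g := by
        intro g hge hgf; rw [hyδval]; simp [hge, hgf]
      have hyδ0 : ∀ g, 0 ≤ yδ g := by
        intro g
        rcases eq_or_ne g e with rfl | hge
        · rw [hyδe]; linarith
        · rcases eq_or_ne g f with rfl | hgf
          · rw [hyδf]; have := hx0 g; linarith
          · rw [hyδg g hge hgf]; exact hx0 g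
      have hyδB : yδ ∈ basePolytope ρ := by
        refine ⟨hyδ0, ?_, ?_⟩
        · intro V
          have hV := hyB.2.1 V
          have hs1 : ∑ g ∈ V, (x + ε • ((Pi.single f (1:ℝ) - Pi.single e 1)) : E → ℝ) g
              = (∑ g ∈ V, x g)
                + ε * ((if f ∈ V then (1:ℝ) else 0) - (if e ∈ V then 1 else 0)) := by
            simp only [Pi.add_apply, Pi.smul_apply, smul_eq_mul, Finset.sum_add_distrib,
              ← Finset.mul_sum, sum_single_diff]
          have hs2 : ∑ g ∈ V, yδ g
              = (∑ g ∈ V, x g)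
                + δ * ((if f ∈ V then (1:ℝ) else 0) - (if e ∈ V then 1 else 0)) := by
            simp only [hyδdef, Pi.add_apply, Pi.smul_apply, smul_eq_mul,
              Finset.sum_add_distrib, ← Finset.mul_sum, sum_single_diff]
          rw [hs1] at hV
          rw [hs2]
          have hxV := hxle V
          by_cases hfV : f ∈ V <;> by_cases heV : e ∈ V <;>
            simp only [hfV, heV, if_true, if_false] at hV ⊢ <;> linarith
        · have hs2 : ∑ g, yδ g
              = (∑ g, x g)
                + δ * ((if f ∈ Finset.univ then (1:ℝ) else 0)
                  - (if e ∈ Finset.univ then 1 else 0)) := by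
            simp only [hyδdef, Pi.add_apply, Pi.smul_apply, smul_eq_mul,
              Finset.sum_add_distrib, ← Finset.mul_sum, sum_single_diff]
          rw [hs2]; simp [hxuniv]
      have h0 : beckmann c x ≤ beckmann c yδ := hmin yδ hyδB
      have hdiff := beckmann_sub c hc_cont x yδ hx0 hyδ0
      have hzero : ∀ g ∈ Finset.univ, g ∉ ({e, f} : Finset E) →
          (∫ t in (x g)..(yδ g), c g t) = 0 := by
        intro g _ hg
        simp only [Finset.mem_insert, Finset.mem_singleton, not_or] at hg
        rw [hyδg g hg.1 hg.2, intervalIntegral.integral_same]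
      have hsplit : ∑ g, ∫ t in (x g)..(yδ g), c g t
          = (∫ t in (x e)..(yδ e), c e t) + ∫ t in (x f)..(yδ f), c f t := by
        rw [← Finset.sum_subset (Finset.subset_univ ({e, f} : Finset E)) hzero,
          Finset.sum_pair hef]
      have hIe : c e (x e - δ) * δ ≤ ∫ t in (x e - δ)..(x e), c e t := by
        have := grad_le (c e) (hc_cont e) (hc_mono e) (a := x e - δ) (b := x e)
          (by linarith) (hx0 e)
        linarith [this]
      have hIf : ∫ t in (x f)..(x f + δ), c f t ≤ c f (x f + δ) * δ := by
        have := grad_ge (c f) (hc_cont f) (hc_mono f) (a := x f) (b := x f + δ)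
          (hx0 f) (by linarith)
        linarith [this]
      have hsymm : (∫ t in (x e)..(yδ e), c e t) = - ∫ t in (x e - δ)..(x e), c e t := by
        rw [hyδe, intervalIntegral.integral_symm]
      have : 0 ≤ (∫ t in (x e)..(yδ e), c e t) + ∫ t in (x f)..(yδ f), c f t := by
        rw [← hsplit, ← hdiff]; linarith
      rw [hsymm, hyδf] at this
      have hfinal : c e (x e - δ) * δ ≤ c f (x f + δ) * δ := by linarith
      exact le_of_mul_le_mul_right hfinal hδ
    -- take the limit δ → 0⁺
    have hcwe : ContinuousWithinAt (c e) (Set.Ici 0) (x e) :=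
      (hc_cont e).continuousWithinAt (Set.mem_Ici.2 (hx0 e))
    have hcwf : ContinuousWithinAt (c f) (Set.Ici 0) (x f) :=
      (hc_cont f).continuousWithinAt (Set.mem_Ici.2 (hx0 f))
    have hte : Filter.Tendsto (fun δ => c e (x e - δ)) (nhdsWithin 0 (Set.Ioi 0))
        (nhds (c e (x e))) := by
      apply hcwe.tendsto.comp
      rw [tendsto_nhdsWithin_iff]
      constructor
      · have : Filter.Tendsto (fun δ : ℝ => x e - δ) (nhds 0) (nhds (x e)) := by
          exact (continuous_const.sub continuous_id).tendsto' (0 : ℝ) (x e) (by simp)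
        exact this.mono_left nhdsWithin_le_nhds
      · filter_upwards [Ioc_mem_nhdsGT_of_mem ⟨le_refl (0:ℝ), hε⟩] with δ hδ
        exact Set.mem_Ici.2 (by rcases hδ with ⟨h1, h2⟩; linarith)
    have htf : Filter.Tendsto (fun δ => c f (x f + δ)) (nhdsWithin 0 (Set.Ioi 0))
        (nhds (c f (x f))) := by
      apply hcwf.tendsto.comp
      rw [tendsto_nhdsWithin_iff]
      constructor
      · have : Filter.Tendsto (fun δ : ℝ => x f + δ) (nhds 0) (nhds (x f)) := by
          exact (continuous_const.add continuous_id).tendsto' (0 : ℝ) (x f) (by simp)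
        exact this.mono_left nhdsWithin_le_nhds
      · filter_upwards [self_mem_nhdsWithin] with δ hδ
        have : (0:ℝ) < δ := hδ
        exact Set.mem_Ici.2 (by linarith [hx0 f])
    refine le_of_tendsto_of_tendsto hte htf ?_
    filter_upwards [Ioc_mem_nhdsGT_of_mem ⟨le_refl (0:ℝ), hε⟩] with δ hδ
    exact key δ hδ.1 hδ.2
  · -- exchange condition ⇒ minimizer
    intro hxc y hy
    obtain ⟨hy0, hyle, hyuniv⟩ := hy
    have hyB : y ∈ basePolytope ρ := ⟨hy0, hyle, hyuniv⟩
    have hdiff := beckmann_sub c hc_cont x y hx0 hy0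
    have h1 : ∑ g, c g (x g) * (y g - x g) ≤ ∑ g, ∫ t in (x g)..(y g), c g t :=
      Finset.sum_le_sum fun g _ => grad_le (c g) (hc_cont g) (hc_mono g) (hx0 g) (hy0 g)
    have hz : ∑ g, (y g - x g) = 0 := by
      rw [Finset.sum_sub_distrib, hyuniv, hxuniv]; ring
    have ht : ∀ t : ℝ, 0 ≤ ∑ g ∈ Finset.univ.filter (fun g => t < (fun g => c g (x g)) g),
        (y g - x g) := by
      intro t
      have hthr := threshold ρ hsub hnorm x y hxB hyB (fun g => c g (x g)) hxc t
      have hsplit := Finset.sum_filter_add_sum_filter_not Finset.univ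
        (fun g => t < c g (x g)) (fun g => y g - x g)
      have hfe : Finset.univ.filter (fun g => ¬ t < c g (x g))
          = Finset.univ.filter (fun g => c g (x g) ≤ t) := by
        apply Finset.filter_congr
        intro g _
        simp [not_lt]
      rw [hfe] at hsplit
      have h2 : ∑ g ∈ Finset.univ.filter (fun g => c g (x g) ≤ t), (y g - x g) ≤ 0 := by
        rw [Finset.sum_sub_distrib]
        linarith [hthr]
      have h3 : ∑ g, (y g - x g) = 0 := hz
      rw [h3] at hsplit
      linarith [hsplit]
    have habel := abel_nonneg (fun g => c g (x g)) (fun g => y g - x g) hz ht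
    linarith [hdiff, h1, habel]
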